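/- Let L/K be an extension of number fields such that every p-adic valuation of K has a unique extension to L. Then for every Weil q-number π ∈ L (q a power of p), there exists a positive integer k with π^k ∈ K. -/

import Mathlib

open NumberField IsDedekindDomain

set_option maxHeartbeats 1000000

open UniqueFactorizationMonoid

theorem count_nf_map {R S : Type*} [CommRing R] [IsDedekindDomain R] [CommRing S]
    [IsDedekindDomain S] [DecidableEq (Ideal R)] [DecidableEq (Ideal S)]
    (f : R →+* S) (hf : Function.Injective f)
    {I Q : Ideal R} {P : Ideal S} [hQp : Q.IsPrime] [hPp : P.IsPrime]
    (hI : I ≠ ⊥) (hQ : Q ≠ ⊥) (hP : P ≠ ⊥) (hQP : Q = P.comap f) :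
    (normalizedFactors (I.map f)).count P
      = (normalizedFactors I).count Q * (normalizedFactors (Q.map f)).count P := by
  haveI : Q.IsMaximal := Ring.DimensionLEOne.maximalOfPrime hQ hQp
  obtain ⟨J, hcop, hIeq⟩ := Ideal.eq_prime_pow_mul_coprime hI Q
  have hJ : J ≠ ⊥ := by
    rintro rfl; rw [← Submodule.zero_eq_bot, mul_zero, Submodule.zero_eq_bot] at hIeq
    exact hI hIeq
  have hmapQ : Q.map f ≠ ⊥ := by
    rwa [Ne, Ideal.map_eq_bot_iff_of_injective hf]
  have hmapJ : J.map f ≠ ⊥ := by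
    rwa [Ne, Ideal.map_eq_bot_iff_of_injective hf]
  have hcount0 : (normalizedFactors (J.map f)).count P = 0 := by
    rw [Multiset.count_eq_zero]
    intro hmem
    have hle : J.map f ≤ P := Ideal.le_of_dvd (dvd_of_mem_normalizedFactors hmem)
    have hQle : Q.map f ≤ P := Ideal.map_le_iff_le_comap.mpr (le_of_eq hQP)
    have : (⊤ : Ideal S) ≤ P := by
      rw [← Ideal.map_top f, ← hcop, Ideal.map_sup]
      exact sup_le hQle hle
    exact hPp.ne_top (top_le_iff.mp this)
  conv_lhs => rw [hIeq]
  rw [Ideal.map_mul, Ideal.map_pow,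
    normalizedFactors_mul (pow_ne_zero _ hmapQ) hmapJ, Multiset.count_add,
    normalizedFactors_pow, Multiset.count_nsmul, hcount0, add_zero]
  convert rfl

theorem count_nf_map_equiv {R : Type*} [CommRing R] [IsDedekindDomain R] [DecidableEq (Ideal R)]
    (σ : R ≃+* R) {I : Ideal R} {P : Ideal R} [hPp : P.IsPrime]
    (hI : I ≠ ⊥) (hP : P ≠ ⊥) :
    (normalizedFactors (I.map (σ : R →+* R))).count P
      = (normalizedFactors I).count (P.comap (σ : R →+* R)) := by
  set Q : Ideal R := P.comap (σ : R →+* R) with hQdef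
  haveI hQp : Q.IsPrime := Ideal.IsPrime.comap _
  have hmapQ : Q.map (σ : R →+* R) = P :=
    Ideal.map_comap_of_surjective (σ : R →+* R) σ.surjective P
  have hQ : Q ≠ ⊥ := by
    intro h
    rw [h, Ideal.map_bot] at hmapQ
    exact hP hmapQ.symm
  have := count_nf_map (σ : R →+* R) σ.injective hI hQ hP hQdef
  rw [this, hmapQ]
  rw [normalizedFactors_irreducible ((Ideal.prime_of_isPrime hP hPp).irreducible), normalize_eq,
    Multiset.count_singleton_self, mul_one]

theorem dvd_pow_nat_of_abs {M : Type*} [Field M] [NumberField M] [IsGalois ℚ M] (x : 𝓞 M)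
    (q : ℕ) (hx : ∀ φ : M →+* ℂ, ‖φ (x : M)‖ = Real.sqrt q) :
    x ∣ (q : 𝓞 M) ^ Module.finrank ℚ M := by
  set D := Module.finrank ℚ M with hD
  set N : ℚ := Algebra.norm ℚ (x : M) with hN
  have h1 : algebraMap ℚ ℂ N = ∏ φ : M →ₐ[ℚ] ℂ, φ (x : M) :=
    Algebra.norm_eq_prod_embeddings ℚ ℂ _
  have h2 : ‖algebraMap ℚ ℂ N‖ = Real.sqrt q ^ D := by
    rw [h1, norm_prod]
    rw [Finset.prod_congr rfl (fun φ _ => hx φ.toRingHom), Finset.prod_const]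
    rw [Finset.card_univ, AlgHom.card]
  have h3 : |(N : ℝ)| = Real.sqrt q ^ D := by
    rwa [show algebraMap ℚ ℂ N = ((N : ℝ) : ℂ) by push_cast; rfl, Complex.norm_real] at h2
  have h4 : (N : ℝ) ^ 2 = (q : ℝ) ^ D := by
    rw [← sq_abs, h3, ← pow_mul, mul_comm, pow_mul, Real.sq_sqrt (by positivity)]
  have h5 : N ^ 2 = (q : ℚ) ^ D := by
    have := h4
    push_cast at this ⊢
    exact_mod_cast this
  set c : 𝓞 ℚ := RingOfIntegers.norm ℚ x with hc
  have hcN : (c : ℚ) = N := RingOfIntegers.coe_norm ℚ x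
  have h6 : c ^ 2 = (q : 𝓞 ℚ) ^ D := by
    have : ((c ^ 2 : 𝓞 ℚ) : ℚ) = (((q : 𝓞 ℚ) ^ D : 𝓞 ℚ) : ℚ) := by
      push_cast [hcN]
      exact_mod_cast h5
    exact RingOfIntegers.coe_injective (by exact_mod_cast this)
  have hdvd1 : x ∣ algebraMap (𝓞 ℚ) (𝓞 M) c := RingOfIntegers.dvd_norm ℚ x
  have hdvd2 : algebraMap (𝓞 ℚ) (𝓞 M) c ∣ (q : 𝓞 M) ^ D := by
    have : c ∣ (q : 𝓞 ℚ) ^ D := h6 ▸ (dvd_pow_self c two_ne_zero)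
    have := map_dvd (algebraMap (𝓞 ℚ) (𝓞 M)) this
    rwa [map_pow, map_natCast] at this
  exact hdvd1.trans hdvd2

/-- Let `L/K` be an extension of number fields such that every `p`-adic
valuation of `K` has a unique extension to `L`. Then for every Weil `q`-number `π ∈ L`
(`q` a power of `p`), there exists a positive integer `k` with `π ^ k ∈ K`. -/
theorem stmt3 (p n q : ℕ) (hp : p.Prime) (hn : 0 < n) (hq : q = p ^ n)
    (K L : Type*) [Field K] [NumberField K] [Field L] [NumberField L] [Algebra K L]
    (huniq : ∀ v : HeightOneSpectrum (𝓞 K), (p : 𝓞 K) ∈ v.asIdeal →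
      ∃! w : HeightOneSpectrum (𝓞 L),
        w.asIdeal.comap (algebraMap (𝓞 K) (𝓞 L)) = v.asIdeal)
    (π : 𝓞 L)
    (habs : ∀ σ : L →+* ℂ, ‖σ (π : L)‖ = Real.sqrt q) :
    ∃ k : ℕ, 0 < k ∧ (π : L) ^ k ∈ (algebraMap K L).range := by
  classical
  -- setup of the Galois closure M of L over ℚ
  set AC := AlgebraicClosure L with hAC
  haveI : IsScalarTower ℚ L AC := IsScalarTower.of_algebraMap_eq' (RingHom.ext_rat _ _)
  haveI : Algebra.IsAlgebraic ℚ AC := Algebra.IsAlgebraic.trans ℚ L AC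
  haveI : IsAlgClosure ℚ AC := ⟨inferInstance, inferInstance⟩
  haveI : Normal ℚ AC := IsAlgClosure.normal ℚ AC
  set M := IntermediateField.normalClosure ℚ L AC with hM
  haveI : Normal ℚ M := normalClosure.normal ℚ L AC
  haveI : NumberField M := ⟨⟩
  haveI : IsGalois ℚ M := ⟨⟩
  letI : Algebra K M := ((algebraMap L M).comp (algebraMap K L)).toAlgebra
  haveI : IsScalarTower K L M := IsScalarTower.of_algebraMap_eq' rfl
  haveI : IsScalarTower ℚ K M := IsScalarTower.of_algebraMap_eq' (RingHom.ext_rat _ _)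
  haveI : IsGalois K M := IsGalois.tower_top_of_isGalois ℚ K M
  -- basic positivity facts
  have hq1 : 0 < q := hq ▸ pow_pos hp.pos n
  have hsq : (0:ℝ) < Real.sqrt q := Real.sqrt_pos.mpr (by exact_mod_cast hq1)
  -- π is nonzero
  have hπ0 : π ≠ 0 := by
    have : Nonempty (L →+* ℂ) := by
      rw [← Fintype.card_pos_iff, NumberField.Embeddings.card L ℂ]
      exact Module.finrank_pos
    obtain ⟨σ⟩ := this
    intro h
    rw [h] at habs
    have := habs σ
    simp at this
    exact hsq.ne' this.symm
  -- the image of π in 𝓞 M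
  set πM : 𝓞 M := algebraMap (𝓞 L) (𝓞 M) π with hπM
  have hcoeπM : (πM : M) = algebraMap L M (π : L) := rfl
  have habsM : ∀ φ : M →+* ℂ, ‖φ (πM : M)‖ = Real.sqrt q := by
    intro φ
    rw [hcoeπM]
    exact habs (φ.comp (algebraMap L M))
  have hLMinj : Function.Injective (algebraMap (𝓞 L) (𝓞 M)) := by
    intro x y hxy
    have : (algebraMap (𝓞 L) (𝓞 M) x : M) = (algebraMap (𝓞 L) (𝓞 M) y : M) := by rw [hxy]
    have h2 : algebraMap L M (x : L) = algebraMap L M (y : L) := this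
    exact RingOfIntegers.ext ((algebraMap L M).injective h2)
  have hπM0 : πM ≠ 0 := fun h => hπ0 (hLMinj (by rw [map_zero, ← hπM]; exact h))
  have hdvdq : πM ∣ (p : 𝓞 ↥M) ^ (n * Module.finrank ℚ ↥M) := by
    have h := dvd_pow_nat_of_abs πM q habsM
    rwa [hq, Nat.cast_pow, ← pow_mul] at h
  have hKLinj : Function.Injective (algebraMap (𝓞 K) (𝓞 L)) := by
    intro x y hxy
    have h2 : algebraMap K L (x : K) = algebraMap K L (y : K) :=
      congrArg (fun z : 𝓞 L => (z : L)) hxy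
    exact RingOfIntegers.ext ((algebraMap K L).injective h2)
  have hKMinj : Function.Injective (algebraMap (𝓞 K) (𝓞 ↥M)) := by
    rw [IsScalarTower.algebraMap_eq (𝓞 K) (𝓞 L) (𝓞 ↥M)]
    exact hLMinj.comp hKLinj
  have hpL0 : (p : 𝓞 L) ≠ 0 := Nat.cast_ne_zero.mpr hp.ne_zero
  have hpK0 : (p : 𝓞 K) ≠ 0 := Nat.cast_ne_zero.mpr hp.ne_zero
  set f := algebraMap (𝓞 L) (𝓞 ↥M) with hf
  set IL : Ideal (𝓞 L) := Ideal.span {π} with hIL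
  set Iπ : Ideal (𝓞 ↥M) := Ideal.span {πM} with hIπ
  have hIL0 : IL ≠ ⊥ := by simpa [hIL, Ideal.span_singleton_eq_bot] using hπ0
  have hIπ0 : Iπ ≠ ⊥ := by simpa [hIπ, Ideal.span_singleton_eq_bot] using hπM0
  have hIπmap : Iπ = IL.map f := by rw [hIπ, hIL, Ideal.map_span, Set.image_singleton]
  have key : ∀ σ : ↥M ≃ₐ[K] ↥M, πM ∣ (RingOfIntegers.mapAlgEquiv σ) πM := by
    intro σ
    set σA : 𝓞 ↥M ≃ₐ[𝓞 K] 𝓞 ↥M := RingOfIntegers.mapAlgEquiv σ with hσA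
    set σr : 𝓞 ↥M ≃+* 𝓞 ↥M := σA.toRingEquiv with hσr
    have hσπ0 : σA πM ≠ 0 := fun h => hπM0 (by rwa [map_eq_zero_iff _ σA.injective] at h)
    have hIσ : Ideal.span {σA πM} = Iπ.map (σr : 𝓞 ↥M →+* 𝓞 ↥M) := by
      rw [hIπ, Ideal.map_span, Set.image_singleton]; rfl
    suffices hdvd : Iπ ∣ Ideal.span {σA πM} by
      rw [Ideal.dvd_iff_le] at hdvd
      exact Ideal.mem_span_singleton.mp (hdvd (Ideal.mem_span_singleton_self _))
    have hJ0 : Ideal.span {σA πM} ≠ ⊥ := by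
      simpa [Ideal.span_singleton_eq_bot] using hσπ0
    rw [dvd_iff_normalizedFactors_le_normalizedFactors hIπ0 hJ0, Multiset.le_iff_count]
    intro a
    by_cases hmem : a ∈ normalizedFactors Iπ
    swap
    · simp [Multiset.count_eq_zero_of_notMem hmem]
    have haprime : Prime a := prime_of_normalized_factor a hmem
    haveI haP : a.IsPrime := Ideal.isPrime_of_prime haprime
    have ha0 : a ≠ ⊥ := haprime.ne_zero
    have hIσcount : (normalizedFactors (Ideal.span {σA πM})).count a
        = (normalizedFactors Iπ).count (a.comap (σr : 𝓞 ↥M →+* 𝓞 ↥M)) := by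
      rw [hIσ]; exact count_nf_map_equiv σr hIπ0 ha0
    rw [hIσcount]
    set P₀ : Ideal (𝓞 ↥M) := a.comap (σr : 𝓞 ↥M →+* 𝓞 ↥M) with hP₀
    haveI hP₀p : P₀.IsPrime := Ideal.IsPrime.comap _
    have hP₀0 : P₀ ≠ ⊥ := by
      intro h
      have h2 : a = ⊥ := by
        rw [← Ideal.map_comap_of_surjective (σr : 𝓞 ↥M →+* 𝓞 ↥M) σr.surjective a, ← hP₀, h,
          Ideal.map_bot]
      exact ha0 h2
    by_cases hpP : (p : 𝓞 ↥M) ∈ a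
    case neg =>
      exfalso
      have hle : Iπ ≤ a := Ideal.le_of_dvd (dvd_of_mem_normalizedFactors hmem)
      have h1 : πM ∈ a := hle (Ideal.mem_span_singleton_self _)
      obtain ⟨t, ht⟩ := hdvdq
      have h2 : (p : 𝓞 ↥M) ^ (n * Module.finrank ℚ ↥M) ∈ a := ht ▸ Ideal.mul_mem_right _ _ h1
      exact hpP (haP.mem_of_pow_mem _ h2)
    case pos =>
      have hpP₀ : (p : 𝓞 ↥M) ∈ P₀ := by
        rw [hP₀, Ideal.mem_comap, map_natCast]; exact hpP
      set Q : Ideal (𝓞 L) := a.comap f with hQdef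
      set Q₀ : Ideal (𝓞 L) := P₀.comap f with hQ₀def
      haveI hQp : Q.IsPrime := Ideal.IsPrime.comap _
      haveI hQ₀p : Q₀.IsPrime := Ideal.IsPrime.comap _
      have hpQ : (p : 𝓞 L) ∈ Q := by
        rw [hQdef, Ideal.mem_comap, map_natCast]; exact hpP
      have hpQ₀ : (p : 𝓞 L) ∈ Q₀ := by
        rw [hQ₀def, Ideal.mem_comap, map_natCast]; exact hpP₀
      have hQ0 : Q ≠ ⊥ := fun h => hpL0 ((Submodule.mem_bot _).mp (h ▸ hpQ))
      have hQ₀0 : Q₀ ≠ ⊥ := fun h => hpL0 ((Submodule.mem_bot _).mp (h ▸ hpQ₀))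
      set 𝔭 : Ideal (𝓞 K) := Q.comap (algebraMap (𝓞 K) (𝓞 L)) with h𝔭def
      haveI h𝔭p : 𝔭.IsPrime := Ideal.IsPrime.comap _
      have hp𝔭 : (p : 𝓞 K) ∈ 𝔭 := by
        rw [h𝔭def, Ideal.mem_comap, map_natCast]; exact hpQ
      have h𝔭0 : 𝔭 ≠ ⊥ := fun h => hpK0 ((Submodule.mem_bot _).mp (h ▸ hp𝔭))
      have hQ₀K : Q₀.comap (algebraMap (𝓞 K) (𝓞 L)) = 𝔭 := by
        have hiff : ∀ x : 𝓞 K, (algebraMap (𝓞 K) (𝓞 L)) x ∈ Q₀ ↔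
            (algebraMap (𝓞 K) (𝓞 L)) x ∈ Q := by
          intro x
          simp only [hQ₀def, hQdef, hP₀, Ideal.mem_comap]
          have hfx : f ((algebraMap (𝓞 K) (𝓞 L)) x) = algebraMap (𝓞 K) (𝓞 ↥M) x := by
            rw [IsScalarTower.algebraMap_eq (𝓞 K) (𝓞 L) (𝓞 ↥M)]; rfl
          have hx : σr (f ((algebraMap (𝓞 K) (𝓞 L)) x)) = f ((algebraMap (𝓞 K) (𝓞 L)) x) := by
            rw [hfx]; exact σA.commutes x
          exact iff_of_eq (congrArg (· ∈ a) hx)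
        ext x
        simpa [h𝔭def, Ideal.mem_comap] using hiff x
      obtain ⟨w, -, hwuniq⟩ := huniq ⟨𝔭, h𝔭p, h𝔭0⟩ hp𝔭
      have h1 := hwuniq ⟨Q, hQp, hQ0⟩ h𝔭def.symm
      have h2 := hwuniq ⟨Q₀, hQ₀p, hQ₀0⟩ hQ₀K
      have hQQ₀ : Q = Q₀ := congrArg HeightOneSpectrum.asIdeal (h1.trans h2.symm)
      have hc1 : (normalizedFactors Iπ).count a
          = (normalizedFactors IL).count Q * (normalizedFactors (Q.map f)).count a := by
        rw [hIπmap]; exact count_nf_map f hLMinj hIL0 hQ0 ha0 hQdef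
      have hc2 : (normalizedFactors Iπ).count P₀
          = (normalizedFactors IL).count Q₀ * (normalizedFactors (Q₀.map f)).count P₀ := by
        rw [hIπmap]; exact count_nf_map f hLMinj hIL0 hQ₀0 hP₀0 hQ₀def
      have hmapQ0 : Q.map f ≠ ⊥ := by
        rwa [Ne, Ideal.map_eq_bot_iff_of_injective hLMinj]
      have hmap𝔭0 : 𝔭.map (algebraMap (𝓞 K) (𝓞 ↥M)) ≠ ⊥ := by
        rwa [Ne, Ideal.map_eq_bot_iff_of_injective hKMinj]
      have hmap𝔭L0 : 𝔭.map (algebraMap (𝓞 K) (𝓞 L)) ≠ ⊥ := by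
        rwa [Ne, Ideal.map_eq_bot_iff_of_injective hKLinj]
      -- counts as ramification indices
      have hcnt1 : (normalizedFactors (Q.map f)).count a
          = Ideal.ramificationIdx' Q a :=
        (Ideal.IsDedekindDomain.ramificationIdx'_eq_normalizedFactors_count hmapQ0 haP ha0).symm
      have hcnt2 : (normalizedFactors (Q.map f)).count P₀
          = Ideal.ramificationIdx' Q P₀ :=
        (Ideal.IsDedekindDomain.ramificationIdx'_eq_normalizedFactors_count hmapQ0 hP₀p hP₀0).symm
      -- tower formulas
      have htow1 : Ideal.ramificationIdx' 𝔭 a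
          = Ideal.ramificationIdx' 𝔭 Q * Ideal.ramificationIdx' Q a :=
        Ideal.ramificationIdx'_algebra_tower hmapQ0 hmap𝔭0
          (Ideal.map_le_iff_le_comap.mpr (le_of_eq hQdef))
      have htow2 : Ideal.ramificationIdx' 𝔭 P₀
          = Ideal.ramificationIdx' 𝔭 Q * Ideal.ramificationIdx' Q P₀ :=
        Ideal.ramificationIdx'_algebra_tower hmapQ0 hmap𝔭0
          (Ideal.map_le_iff_le_comap.mpr (hQQ₀ ▸ le_of_eq hQ₀def))
      have hgal : Ideal.ramificationIdx' 𝔭 P₀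
          = Ideal.ramificationIdx' 𝔭 a := by
        rw [hP₀]
        exact Ideal.ramificationIdx'_comap_eq 𝔭 σA a
      have heKL0 : Ideal.ramificationIdx' 𝔭 Q ≠ 0 :=
        Ideal.IsDedekindDomain.ramificationIdx'_ne_zero hmap𝔭L0 hQp
          (Ideal.map_le_iff_le_comap.mpr (le_of_eq h𝔭def))
      have heq : Ideal.ramificationIdx' Q a = Ideal.ramificationIdx' Q P₀ :=
        Nat.eq_of_mul_eq_mul_left (Nat.pos_of_ne_zero heKL0)
          (htow1.symm.trans (hgal.symm.trans htow2))
      rw [hc1, hc2, ← hQQ₀, hcnt1, hcnt2, heq]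
  -- each σ(π)/π is a root of unity
  have hroot : ∀ σ : ↥M ≃ₐ[K] ↥M, ∃ m : ℕ, 0 < m ∧
      ((RingOfIntegers.mapAlgEquiv σ) πM) ^ m = πM ^ m := by
    intro σ
    obtain ⟨u, hu⟩ := key σ
    have hu1 : ∀ φ : ↥M →+* ℂ, ‖φ (u : ↥M)‖ = 1 := by
      intro φ
      have hcoe : ((RingOfIntegers.mapAlgEquiv σ πM : 𝓞 ↥M) : ↥M) = σ (πM : ↥M) := rfl
      have h1 : ‖φ ((RingOfIntegers.mapAlgEquiv σ πM : 𝓞 ↥M) : ↥M)‖ = Real.sqrt q := by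
        rw [hcoe]
        exact habsM (φ.comp (σ : ↥M →+* ↥M))
      have hcm : ((πM * u : 𝓞 ↥M) : ↥M) = (πM : ↥M) * (u : ↥M) :=
        map_mul (algebraMap (𝓞 ↥M) ↥M) _ _
      rw [hu, hcm, map_mul, norm_mul, habsM φ] at h1
      have h2 : Real.sqrt q * ‖φ (u : ↥M)‖ = Real.sqrt q * 1 := by
        rw [mul_one]; exact h1
      exact mul_left_cancel₀ hsq.ne' h2
    obtain ⟨m, hm, hum⟩ := NumberField.Embeddings.pow_eq_one_of_norm_eq_one ↥M ℂ
      (RingOfIntegers.isIntegral_coe u) hu1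
    refine ⟨m, hm, ?_⟩
    have hu' : u ^ m = 1 := by
      apply RingOfIntegers.coe_injective
      rw [map_pow, map_one]
      exact_mod_cast hum
    rw [hu, mul_pow, hu', mul_one]
  choose m hm hpow using hroot
  haveI : FiniteDimensional K ↥M := FiniteDimensional.right ℚ K ↥M
  set N : ℕ := ∏ σ : ↥M ≃ₐ[K] ↥M, m σ with hN
  have hN0 : 0 < N := Finset.prod_pos (fun σ _ => hm σ)
  have hcoeN : ∀ z : 𝓞 ↥M, ((z ^ N : 𝓞 ↥M) : ↥M) = (z : ↥M) ^ N := fun z =>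
    map_pow (algebraMap (𝓞 ↥M) ↥M) z N
  have hfixed : ∀ σ : ↥M ≃ₐ[K] ↥M, σ ((πM : ↥M) ^ N) = (πM : ↥M) ^ N := by
    intro σ
    obtain ⟨t, ht⟩ := Finset.dvd_prod_of_mem m (Finset.mem_univ σ)
    have h1 : (RingOfIntegers.mapAlgEquiv σ πM) ^ N = πM ^ N := by
      have hNt : N = m σ * t := by rw [hN]; exact ht
      rw [hNt, pow_mul, pow_mul, hpow σ]
    have hcoe : ((RingOfIntegers.mapAlgEquiv σ πM : 𝓞 ↥M) : ↥M) = σ (πM : ↥M) := rfl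
    calc σ ((πM : ↥M) ^ N) = (σ ((πM : ↥M))) ^ N := map_pow σ _ N
      _ = ((RingOfIntegers.mapAlgEquiv σ πM : 𝓞 ↥M) : ↥M) ^ N := by rw [hcoe]
      _ = (((RingOfIntegers.mapAlgEquiv σ πM) ^ N : 𝓞 ↥M) : ↥M) := (hcoeN _).symm
      _ = ((πM ^ N : 𝓞 ↥M) : ↥M) := by rw [h1]
      _ = (πM : ↥M) ^ N := hcoeN _
  have hx : (πM : ↥M) ^ N ∈ (⊥ : IntermediateField K ↥M) := by
    rw [← IsGalois.fixedField_fixingSubgroup (⊥ : IntermediateField K ↥M)]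
    intro g
    exact hfixed g.1
  obtain ⟨y, hy⟩ := IntermediateField.mem_bot.mp hx
  refine ⟨N, hN0, ?_⟩
  rw [RingHom.mem_range]
  refine ⟨y, ?_⟩
  apply (algebraMap L ↥M).injective
  have halg : algebraMap L ↥M (algebraMap K L y) = algebraMap K ↥M y := rfl
  rw [halg, hy, map_pow, ← hcoeπM]
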